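/- A Lie subalgebra 𝔥 of Der(k[x,y]) that contains homogeneous derivations ∂_{−1,k} and ∂_{l,−1} with k, l ≥ 1 is not solvable. -/

import Mathlib

open MvPolynomial

/-- The homogeneous zero-divergence derivation
`∂_{a,b} = (b+1)x^{a+1}y^b ∂/∂x − (a+1)x^a y^{b+1} ∂/∂y` of `k[x,y]`;
in particular `∂_{−1,K} = (K+1)y^K ∂/∂x` and `∂_{l,−1} = −(l+1)x^l ∂/∂y`. -/
noncomputable def pd (k : Type) [CommRing k] (a b : ℤ) :
    Derivation k (MvPolynomial (Fin 2) k) (MvPolynomial (Fin 2) k) :=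
  MvPolynomial.mkDerivation k fun i =>
    if i = 0 then C ((b + 1 : ℤ) : k) * X 0 ^ (a + 1).toNat * X 1 ^ b.toNat
    else C ((-(a + 1) : ℤ) : k) * X 0 ^ a.toNat * X 1 ^ (b + 1).toNat

set_option linter.unusedSectionVars false

section Aux
variable (k : Type) [Field k] [CharZero k]

lemma pd_X0 (a b : ℤ) : pd k a b (X 0) =
    C ((b + 1 : ℤ) : k) * X 0 ^ (a + 1).toNat * X 1 ^ b.toNat := by
  simp [pd, mkDerivation_X]

lemma pd_X1 (a b : ℤ) : pd k a b (X 1) =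
    C ((-(a + 1) : ℤ) : k) * X 0 ^ a.toNat * X 1 ^ (b + 1).toNat := by
  simp [pd, mkDerivation_X]

lemma deriv_mon (D : Derivation k (MvPolynomial (Fin 2) k) (MvPolynomial (Fin 2) k))
    (r : k) (p q : ℕ) :
    D (C r * X 0 ^ p * X 1 ^ q) =
      C r * ((p : MvPolynomial (Fin 2) k) * X 0 ^ (p-1) * X 1 ^ q * D (X 0)
        + (q : MvPolynomial (Fin 2) k) * X 0 ^ p * X 1 ^ (q-1) * D (X 1)) := by
  have hC : D (C r) = 0 := by
    rw [← MvPolynomial.algebraMap_eq]; exact D.map_algebraMap r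
  simp only [Derivation.leibniz, Derivation.leibniz_pow, hC, smul_eq_mul, smul_zero, mul_zero,
    zero_add, add_zero, nsmul_eq_mul]
  ring

lemma Cint (z : ℤ) : (C ((z : k)) : MvPolynomial (Fin 2) k) = (z : MvPolynomial (Fin 2) k) :=
  map_intCast (C : k →+* MvPolynomial (Fin 2) k) z


lemma bra1 (B c d : ℤ) (hB : 1 ≤ B) (hc : 0 ≤ c) (hd : -1 ≤ d) :
    ⁅pd k (-1) B, pd k c d⁆ = (((B+1)*(c+1) : ℤ) : k) • pd k (c-1) (d+B) := by
  obtain ⟨bm, rfl⟩ : ∃ bm : ℕ, B = (bm : ℤ) + 1 := ⟨(B-1).toNat, by omega⟩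
  obtain ⟨cn, rfl⟩ : ∃ cn : ℕ, c = (cn : ℤ) := ⟨c.toNat, by omega⟩
  apply MvPolynomial.derivation_ext
  intro i
  have e0 := pd_X0 k (-1) ((bm : ℤ)+1)
  have e1 := pd_X1 k (-1) ((bm : ℤ)+1)
  have f0 := pd_X0 k (cn : ℤ) d
  have f1 := pd_X1 k (cn : ℤ) d
  have g0 := pd_X0 k ((cn : ℤ)-1) (d+((bm : ℤ)+1))
  have g1 := pd_X1 k ((cn : ℤ)-1) (d+((bm : ℤ)+1))
  have tb0 : ((-1:ℤ)+1).toNat = 0 := rfl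
  have tb1 : ((bm : ℤ)+1).toNat = bm + 1 := by omega
  simp only [tb0, tb1] at e0
  have e1' : pd k (-1) ((bm : ℤ)+1) (X 1) = 0 := by rw [e1]; norm_num
  clear e1
  rcases eq_or_lt_of_le hd with h | h
  · obtain rfl : d = -1 := h.symm
    have t2 : (((bm : ℤ)+1)).toNat = bm + 1 := by omega
    have t5 : (((cn : ℤ))+1).toNat = cn + 1 := by omega
    have t6 : ((-1 : ℤ)).toNat = 0 := by norm_num
    have t7 : ((cn : ℤ)).toNat = cn := by omega
    have t8 : ((-1 : ℤ)+1).toNat = 0 := by norm_num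
    have t9 : (((cn : ℤ)-1)+1).toNat = cn := by omega
    have t10 : ((cn : ℤ)-1).toNat = cn - 1 := by omega
    have t11 : ((-1 : ℤ)+((bm:ℤ)+1)).toNat = bm := by omega
    have t12 : (((-1:ℤ)+((bm:ℤ)+1))+1).toNat = bm + 1 := by omega
    simp only [t5,t6,t7,t8] at f0 f1
    simp only [t9,t10,t11,t12] at g0 g1
    norm_num at f0
    fin_cases i <;>
    · simp only [Fin.mk_zero, Fin.mk_one, Fin.isValue, Derivation.commutator_apply,
        Derivation.smul_apply]
      simp only [f0, f1, e0, e1', deriv_mon, map_zero]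
      simp only [g0, g1, Nat.add_sub_cancel, smul_eq_C_mul, Cint, map_zero, zero_mul, mul_zero,
        zero_add, add_zero, zero_sub, sub_zero]
      push_cast
      ring
  · obtain ⟨dm, rfl⟩ : ∃ dm : ℕ, d = (dm : ℤ) := ⟨d.toNat, by omega⟩
    have t2 : (((bm : ℤ)+1)).toNat = bm + 1 := by omega
    have t5 : (((cn : ℤ))+1).toNat = cn + 1 := by omega
    have t6 : ((dm : ℤ)).toNat = dm := by omega
    have t7 : ((cn : ℤ)).toNat = cn := by omega
    have t8 : ((dm : ℤ)+1).toNat = dm + 1 := by omega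
    have t9 : (((cn : ℤ)-1)+1).toNat = cn := by omega
    have t10 : ((cn : ℤ)-1).toNat = cn - 1 := by omega
    have t11 : ((dm : ℤ)+((bm:ℤ)+1)).toNat = dm + bm + 1 := by omega
    have t12 : (((dm:ℤ)+((bm:ℤ)+1))+1).toNat = dm + bm + 2 := by omega
    simp only [t5,t6,t7,t8] at f0 f1
    simp only [t9,t10,t11,t12] at g0 g1
    fin_cases i <;>
    · simp only [Fin.mk_zero, Fin.mk_one, Fin.isValue, Derivation.commutator_apply,
        Derivation.smul_apply]
      simp only [f0, f1, e0, e1', deriv_mon, map_zero]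
      simp only [g0, g1, Nat.add_sub_cancel, smul_eq_C_mul, Cint, map_zero, zero_mul, mul_zero,
        zero_add, add_zero, zero_sub, sub_zero]
      push_cast
      ring

lemma bra2 (A c d : ℤ) (hA : 1 ≤ A) (hc : -1 ≤ c) (hd : 0 ≤ d) :
    ⁅pd k A (-1), pd k c d⁆ = ((-(A+1)*(d+1) : ℤ) : k) • pd k (c+A) (d-1) := by
  obtain ⟨am, rfl⟩ : ∃ am : ℕ, A = (am : ℤ) + 1 := ⟨(A-1).toNat, by omega⟩
  obtain ⟨dn, rfl⟩ : ∃ dn : ℕ, d = (dn : ℤ) := ⟨d.toNat, by omega⟩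
  apply MvPolynomial.derivation_ext
  intro i
  have e0 := pd_X0 k ((am : ℤ)+1) (-1)
  have e1 := pd_X1 k ((am : ℤ)+1) (-1)
  have f0 := pd_X0 k c (dn : ℤ)
  have f1 := pd_X1 k c (dn : ℤ)
  have g0 := pd_X0 k (c+((am : ℤ)+1)) ((dn : ℤ)-1)
  have g1 := pd_X1 k (c+((am : ℤ)+1)) ((dn : ℤ)-1)
  have tb1 : ((am : ℤ)+1).toNat = am + 1 := by omega
  have tb2 : ((-1 : ℤ)+1).toNat = 0 := rfl
  simp only [tb1, tb2] at e1
  have e0' : pd k ((am : ℤ)+1) (-1) (X 0) = 0 := by rw [e0]; norm_num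
  clear e0
  rcases eq_or_lt_of_le hc with h | h
  · obtain rfl : c = -1 := h.symm
    have t5 : ((-1 : ℤ)+1).toNat = 0 := rfl
    have t6 : ((dn : ℤ)).toNat = dn := by omega
    have t7 : ((-1 : ℤ)).toNat = 0 := by norm_num
    have t8 : ((dn : ℤ)+1).toNat = dn + 1 := by omega
    have t9 : ((-1 : ℤ)+((am:ℤ)+1)).toNat = am := by omega
    have t10 : (((-1:ℤ)+((am:ℤ)+1))+1).toNat = am + 1 := by omega
    have t11 : ((dn : ℤ)-1).toNat = dn - 1 := by omega
    have t12 : (((dn:ℤ)-1)+1).toNat = dn := by omega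
    simp only [t5,t6,t7,t8] at f0 f1
    simp only [t9,t10,t11,t12] at g0 g1
    norm_num at f1
    fin_cases i <;>
    · simp only [Fin.mk_zero, Fin.mk_one, Fin.isValue, Derivation.commutator_apply,
        Derivation.smul_apply]
      simp only [f0, f1, e1, e0', deriv_mon, map_zero]
      simp only [g0, g1, Nat.add_sub_cancel, smul_eq_C_mul, Cint, map_zero, zero_mul, mul_zero,
        zero_add, add_zero, zero_sub, sub_zero]
      push_cast
      ring
  · obtain ⟨cm, rfl⟩ : ∃ cm : ℕ, c = (cm : ℤ) := ⟨c.toNat, by omega⟩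
    have t5 : ((cm : ℤ)+1).toNat = cm + 1 := by omega
    have t6 : ((dn : ℤ)).toNat = dn := by omega
    have t7 : ((cm : ℤ)).toNat = cm := by omega
    have t8 : ((dn : ℤ)+1).toNat = dn + 1 := by omega
    have t9 : ((cm : ℤ)+((am:ℤ)+1)).toNat = cm + am + 1 := by omega
    have t10 : (((cm:ℤ)+((am:ℤ)+1))+1).toNat = cm + am + 2 := by omega
    have t11 : ((dn : ℤ)-1).toNat = dn - 1 := by omega
    have t12 : (((dn:ℤ)-1)+1).toNat = dn := by omega
    simp only [t5,t6,t7,t8] at f0 f1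
    simp only [t9,t10,t11,t12] at g0 g1
    fin_cases i <;>
    · simp only [Fin.mk_zero, Fin.mk_one, Fin.isValue, Derivation.commutator_apply,
        Derivation.smul_apply]
      simp only [f0, f1, e1, e0', deriv_mon, map_zero]
      simp only [g0, g1, Nat.add_sub_cancel, smul_eq_C_mul, Cint, map_zero, zero_mul, mul_zero,
        zero_add, add_zero, zero_sub, sub_zero]
      push_cast
      ring

lemma pd_ne (B : ℤ) (hB : 1 ≤ B) : pd k (-1) B ≠ 0 := by
  intro h
  have h0 : pd k (-1) B (X 0) = 0 := by rw [h]; rfl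
  rw [pd_X0] at h0
  have hBk : ((B + 1 : ℤ) : k) ≠ 0 := by
    rw [Int.cast_ne_zero]; omega
  have hC : (C ((B + 1 : ℤ) : k) : MvPolynomial (Fin 2) k) ≠ 0 :=
    C_eq_zero.ne.mpr hBk
  exact (mul_ne_zero (mul_ne_zero hC (pow_ne_zero _ (X_ne_zero 0)))
    (pow_ne_zero _ (X_ne_zero 1))) h0

variable (H : LieSubalgebra k (Derivation k (MvPolynomial (Fin 2) k) (MvPolynomial (Fin 2) k)))

def Good (n : ℕ) (D : Derivation k (MvPolynomial (Fin 2) k) (MvPolynomial (Fin 2) k)) : Prop :=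
  ∃ h : D ∈ H, (⟨D, h⟩ : ↥H) ∈ LieAlgebra.derivedSeries k ↥H n

lemma good_zero {D} (h : D ∈ H) : Good k H 0 D :=
  ⟨h, by rw [LieAlgebra.derivedSeries_def, LieAlgebra.derivedSeriesOfIdeal_zero]; trivial⟩

lemma good_lie {n x y} (hx : x ∈ H) (hy : Good k H (n+1) y) : Good k H (n+1) ⁅x, y⁆ := by
  obtain ⟨hym, hyd⟩ := hy
  refine ⟨H.lie_mem hx hym, ?_⟩
  have : (⟨⁅x, y⁆, H.lie_mem hx hym⟩ : ↥H) = ⁅(⟨x, hx⟩ : ↥H), ⟨y, hym⟩⁆ := rfl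
  rw [this]
  exact (LieAlgebra.derivedSeries k ↥H (n+1)).lie_mem hyd

lemma good_lie_succ {n x y} (hx : Good k H n x) (hy : Good k H n y) :
    Good k H (n+1) ⁅x, y⁆ := by
  obtain ⟨hxm, hxd⟩ := hx
  obtain ⟨hym, hyd⟩ := hy
  refine ⟨H.lie_mem hxm hym, ?_⟩
  have : (⟨⁅x, y⁆, H.lie_mem hxm hym⟩ : ↥H) = ⁅(⟨x, hxm⟩ : ↥H), ⟨y, hym⟩⁆ := rfl
  rw [this, LieAlgebra.derivedSeries_def, LieAlgebra.derivedSeriesOfIdeal_succ]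
  exact LieSubmodule.lie_mem_lie
    (by rw [LieAlgebra.derivedSeries_def] at hxd; exact hxd)
    (by rw [LieAlgebra.derivedSeries_def] at hyd; exact hyd)

lemma good_of_smul {n c D} (hc : (c : k) ≠ 0) (h : Good k H n (c • D)) : Good k H n D := by
  obtain ⟨hm, hd⟩ := h
  have hDm : D ∈ H := by
    have := H.smul_mem c⁻¹ hm
    rwa [smul_smul, inv_mul_cancel₀ hc, one_smul] at this
  refine ⟨hDm, ?_⟩
  have : (⟨D, hDm⟩ : ↥H) = c⁻¹ • (⟨c • D, hm⟩ : ↥H) := by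
    apply Subtype.ext
    show D = c⁻¹ • (c • D)
    rw [smul_smul, inv_mul_cancel₀ hc, one_smul]
  rw [this]
  exact (LieAlgebra.derivedSeries k ↥H n).smul_mem _ hd

lemma iterA (n : ℕ) (B : ℤ) (hB : 1 ≤ B) (he : pd k (-1) B ∈ H) :
    ∀ j : ℕ, ∀ c d : ℤ, -1 ≤ c → -1 ≤ d → (c+1).toNat = j →
      Good k H (n+1) (pd k c d) → Good k H (n+1) (pd k (-1) (d + (c+1)*B)) := by
  intro j
  induction j with
  | zero =>
    intro c d hc hd hj hg
    obtain rfl : c = -1 := by omega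
    have : d + (-1+1)*B = d := by ring
    rw [this]
    exact hg
  | succ j ih =>
    intro c d hc hd hj hg
    have hc0 : 0 ≤ c := by omega
    have hbr := good_lie k H he hg
    rw [bra1 k B c d hB hc0 hd] at hbr
    have hne : (((B+1)*(c+1) : ℤ) : k) ≠ 0 := by
      rw [Int.cast_ne_zero]
      have : 0 < (B+1)*(c+1) := by positivity
      omega
    have hg2 := good_of_smul k H hne hbr
    have := ih (c-1) (d+B) (by omega) (by omega) (by omega) hg2
    have harg : (d+B) + ((c-1)+1)*B = d + (c+1)*B := by ring
    rwa [harg] at this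

lemma iterB (n : ℕ) (A : ℤ) (hA : 1 ≤ A) (he : pd k A (-1) ∈ H) :
    ∀ j : ℕ, ∀ c d : ℤ, -1 ≤ c → -1 ≤ d → (d+1).toNat = j →
      Good k H (n+1) (pd k c d) → Good k H (n+1) (pd k (c + (d+1)*A) (-1)) := by
  intro j
  induction j with
  | zero =>
    intro c d hc hd hj hg
    obtain rfl : d = -1 := by omega
    have : c + (-1+1)*A = c := by ring
    rw [this]
    exact hg
  | succ j ih =>
    intro c d hc hd hj hg
    have hd0 : 0 ≤ d := by omega
    have hbr := good_lie k H he hg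
    rw [bra2 k A c d hA hc hd0] at hbr
    have hne : ((-(A+1)*(d+1) : ℤ) : k) ≠ 0 := by
      rw [Int.cast_ne_zero, show -(A+1)*(d+1) = -((A+1)*(d+1)) from by ring]
      have : 0 < (A+1)*(d+1) := by positivity
      omega
    have hg2 := good_of_smul k H hne hbr
    have := ih (c+A) (d-1) (by omega) (by omega) (by omega) hg2
    have harg : (c+A) + ((d-1)+1)*A = c + (d+1)*A := by ring
    rwa [harg] at this

end Aux

/-- A Lie subalgebra of `Der(k[x,y])` containing `∂_{−1,K}` and
`∂_{l,−1}` with `K, l ≥ 1` is not solvable. -/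
theorem stmt17 (k : Type) [Field k] [CharZero k] (K l : ℤ) (hK : 1 ≤ K) (hl : 1 ≤ l)
    (H : LieSubalgebra k (Derivation k (MvPolynomial (Fin 2) k) (MvPolynomial (Fin 2) k)))
    (h1 : pd k (-1) K ∈ H) (h2 : pd k l (-1) ∈ H) :
    ¬ LieAlgebra.IsSolvable ↥H := by
  intro hs
  obtain ⟨n, hn⟩ := LieAlgebra.IsSolvable.solvable k ↥H
  suffices hcl : ∀ m : ℕ, ∃ B A : ℤ, 1 ≤ B ∧ 1 ≤ A ∧
      Good k H m (pd k (-1) B) ∧ Good k H m (pd k A (-1)) by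
    obtain ⟨B, A, hB, hA, ⟨hBm, hBd⟩, -⟩ := hcl n
    rw [hn, LieSubmodule.mem_bot] at hBd
    have : pd k (-1) B = 0 := by
      simpa using congrArg Subtype.val hBd
    exact pd_ne k B hB this
  intro m
  induction m with
  | zero => exact ⟨K, l, hK, hl, good_zero k H h1, good_zero k H h2⟩
  | succ m ih =>
    obtain ⟨B, A, hB, hA, hgB, hgA⟩ := ih
    have hbr := good_lie_succ k H hgB hgA
    rw [bra1 k B A (-1) hB (by omega) (by omega)] at hbr
    have hne : (((B+1)*(A+1) : ℤ) : k) ≠ 0 := by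
      rw [Int.cast_ne_zero]
      have : 0 < (B+1)*(A+1) := by positivity
      omega
    have hg := good_of_smul k H hne hbr
    -- hg : Good (m+1) (pd k (A-1) (-1+B))
    have heB : pd k (-1) B ∈ H := hgB.1
    have heA : pd k A (-1) ∈ H := hgA.1
    have hB' := iterA k H m B hB heB (A-1+1).toNat (A-1) (-1+B) (by omega) (by omega) rfl hg
    have hA' := iterB k H m A hA heA (-1+B+1).toNat (A-1) (-1+B) (by omega) (by omega) rfl hg
    refine ⟨(-1+B) + ((A-1)+1)*B, (A-1) + ((-1+B)+1)*A, ?_, ?_, hB', hA'⟩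
    · nlinarith
    · nlinarith
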